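/- Let 1 ≤ p < ∞ and let B_u, B_v be the weighted backward shifts on ℓ_p(ℤ₊) associated with weight sequences u and v, with ∑_{n=1}^∞ 1/|u₁⋯u_n|^p < ∞ and ∑_{n=1}^∞ 1/|v₁⋯v_n|^p < ∞. Assume there exist d ∈ ℕ, d ≥ 1, 0 ≤ j ≤ d−1 and a non-zero scalar C such that u₁⋯u_{dm+j} = C · v₁⋯v_{dm+j} for all m ≥ 0. Then B_u and B_v are not orthogonal: there exist Borel probability measures m_u, m_v on ℓ_p with m_u B_u-invariant, m_v B_v-invariant, m_u({0}) = 0 = m_v({0}), such that m_u and m_v are not mutually singular. -/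

import Mathlib

open MeasureTheory Filter
open scoped ENNReal NNReal

noncomputable instance {𝕂 : Type*} [RCLike 𝕂] {p : ℝ≥0∞} [Fact (1 ≤ p)] :
    MeasurableSpace (lp (fun _ : ℕ => 𝕂) p) := borel _

instance {𝕂 : Type*} [RCLike 𝕂] {p : ℝ≥0∞} [Fact (1 ≤ p)] :
    BorelSpace (lp (fun _ : ℕ => 𝕂) p) := ⟨rfl⟩


/-- Coordinates of powers of a weighted backward shift. -/
lemma shift_pow_apply_aux {𝕂 : Type*} [RCLike 𝕂] {p : ℝ≥0∞} [Fact (1 ≤ p)]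
    (B : lp (fun _ : ℕ => 𝕂) p →L[𝕂] lp (fun _ : ℕ => 𝕂) p) (w : ℕ → 𝕂)
    (hB : ∀ (x : lp (fun _ : ℕ => 𝕂) p) (n : ℕ),
      (B x : ∀ _ : ℕ, 𝕂) n = w (n + 1) * (x : ∀ _ : ℕ, 𝕂) (n + 1)) :
    ∀ (k : ℕ) (x : lp (fun _ : ℕ => 𝕂) p) (n : ℕ), ((B ^ k) x : ∀ _ : ℕ, 𝕂) n
      = (∏ i ∈ Finset.Icc (n + 1) (n + k), w i) * (x : ∀ _ : ℕ, 𝕂) (n + k) := by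
  intro k
  induction k with
  | zero => intro x n; simp
  | succ k ih =>
    intro x n
    rw [pow_succ, ContinuousLinearMap.mul_apply, ih (B x) n, hB, ← add_assoc,
      Finset.prod_Icc_succ_top (by omega), mul_assoc]

/-- Invariant measure supported on a periodic orbit. -/
lemma periodic_orbit_measure_aux {X : Type*} [MeasurableSpace X]
    (T : X → X) (hT : Measurable T) (z : X) (d : ℕ) (hd : 1 ≤ d)
    (hz : T^[d] z = z) :
    ∃ m : Measure X, IsProbabilityMeasure m ∧
      (∀ A : Set X, MeasurableSet A → m (T ⁻¹' A) = m A) ∧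
      (∀ s : Set X, MeasurableSet s → m s = 0 → z ∉ s) ∧
      (∀ y : X, MeasurableSet {y} → (∀ k, k < d → T^[k] z ≠ y) → m {y} = 0) := by
  set o : ℕ → X := fun k => T^[k] z with ho
  refine ⟨(d : ℝ≥0∞)⁻¹ • ∑ k ∈ Finset.range d, Measure.dirac (o k), ?_, ?_, ?_, ?_⟩
  · constructor
    rw [Measure.smul_apply, Measure.finset_sum_apply, smul_eq_mul]
    simp only [measure_univ]
    rw [Finset.sum_const, Finset.card_range, nsmul_eq_mul, mul_one,
      ENNReal.inv_mul_cancel (by exact_mod_cast (by omega : d ≠ 0)) (ENNReal.natCast_ne_top d)]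
  · intro A hA
    rw [Measure.smul_apply, Measure.smul_apply, Measure.finset_sum_apply,
      Measure.finset_sum_apply]
    congr 1
    have hstep : ∀ k, Measure.dirac (o k) (T ⁻¹' A) = Measure.dirac (o (k + 1)) A := by
      intro k
      rw [Measure.dirac_apply' _ (hT hA), Measure.dirac_apply' _ hA]
      have : o k ∈ T ⁻¹' A ↔ o (k + 1) ∈ A := by
        simp [ho, Set.mem_preimage, Function.iterate_succ_apply']
      by_cases h : o (k + 1) ∈ A
      · rw [Set.indicator_of_mem (this.mpr h), Set.indicator_of_mem h]; rfl
      · rw [Set.indicator_of_notMem (fun hc => h (this.mp hc)), Set.indicator_of_notMem h]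
    simp only [hstep]
    obtain ⟨e, rfl⟩ : ∃ e, d = e + 1 := ⟨d - 1, by omega⟩
    rw [Finset.sum_range_succ, Finset.sum_range_succ']
    have : o (e + 1) = o 0 := by simpa [ho] using hz
    rw [this]
  · intro s hs hms hzs
    rw [Measure.smul_apply, Measure.finset_sum_apply, smul_eq_mul] at hms
    rcases mul_eq_zero.mp hms with h | h
    · exact absurd h (by simp [ENNReal.inv_eq_zero, ENNReal.natCast_ne_top d])
    · have h0 : Measure.dirac (o 0) s = 0 :=
        (Finset.sum_eq_zero_iff.mp h) 0 (Finset.mem_range.mpr (by omega))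
      rw [Measure.dirac_apply' _ hs] at h0
      simp only [ho, Function.iterate_zero_apply] at h0
      rw [Set.indicator_of_mem hzs] at h0
      simp at h0
  · intro y hy hne
    rw [Measure.smul_apply, Measure.finset_sum_apply, smul_eq_mul]
    have : ∀ k ∈ Finset.range d, Measure.dirac (o k) {y} = 0 := by
      intro k hk
      rw [Measure.dirac_apply' _ hy]
      exact Set.indicator_of_notMem (by simpa [ho] using hne k (Finset.mem_range.mp hk)) _
    rw [Finset.sum_congr rfl this]
    simp

/-- Under the summability conditions, if `u₁⋯u_{dm+j} = C·v₁⋯v_{dm+j}` for all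
`m ≥ 0` (for some `d ≥ 1`, `0 ≤ j ≤ d-1`, `C ≠ 0`), then `B_u` and `B_v` are not orthogonal:
they admit invariant probability measures not charging `{0}` which are not mutually singular. -/
theorem not_orthogonal_of_product_relation
    {𝕂 : Type*} [RCLike 𝕂] (p : ℝ≥0∞) [Fact (1 ≤ p)] (hp : p ≠ ⊤)
    (u v : ℕ → 𝕂) (hu0 : ∀ n, 1 ≤ n → u n ≠ 0) (hv0 : ∀ n, 1 ≤ n → v n ≠ 0)
    (hubdd : ∃ M : ℝ, ∀ n, ‖u n‖ ≤ M) (hvbdd : ∃ M : ℝ, ∀ n, ‖v n‖ ≤ M)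
    (hsumu : Summable (fun n : ℕ =>
        (1 : ℝ) / ‖∏ i ∈ Finset.Icc 1 (n + 1), u i‖ ^ p.toReal))
    (hsumv : Summable (fun n : ℕ =>
        (1 : ℝ) / ‖∏ i ∈ Finset.Icc 1 (n + 1), v i‖ ^ p.toReal))
    (Bu Bv : lp (fun _ : ℕ => 𝕂) p →L[𝕂] lp (fun _ : ℕ => 𝕂) p)
    (hBu : ∀ (x : lp (fun _ : ℕ => 𝕂) p) (n : ℕ),
        (Bu x : ∀ _ : ℕ, 𝕂) n = u (n + 1) * (x : ∀ _ : ℕ, 𝕂) (n + 1))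
    (hBv : ∀ (x : lp (fun _ : ℕ => 𝕂) p) (n : ℕ),
        (Bv x : ∀ _ : ℕ, 𝕂) n = v (n + 1) * (x : ∀ _ : ℕ, 𝕂) (n + 1))
    (hrel : ∃ d : ℕ, 1 ≤ d ∧ ∃ j : ℕ, j < d ∧ ∃ C : 𝕂, C ≠ 0 ∧ ∀ m : ℕ,
        ∏ i ∈ Finset.Icc 1 (d * m + j), u i = C * ∏ i ∈ Finset.Icc 1 (d * m + j), v i) :
    ∃ mu mv : Measure (lp (fun _ : ℕ => 𝕂) p),
      IsProbabilityMeasure mu ∧ IsProbabilityMeasure mv ∧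
      (∀ A : Set (lp (fun _ : ℕ => 𝕂) p), MeasurableSet A → mu (Bu ⁻¹' A) = mu A) ∧
      (∀ A : Set (lp (fun _ : ℕ => 𝕂) p), MeasurableSet A → mv (Bv ⁻¹' A) = mv A) ∧
      mu {0} = 0 ∧ mv {0} = 0 ∧ ¬ mu.MutuallySingular mv := by
  classical
  obtain ⟨d, hd, j, hj, C, hC, hrelate⟩ := hrel
  -- abbreviations for partial products
  set Pu : ℕ → 𝕂 := fun n => ∏ i ∈ Finset.Icc 1 n, u i with hPu_def
  set Pv : ℕ → 𝕂 := fun n => ∏ i ∈ Finset.Icc 1 n, v i with hPv_def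
  have hPu0 : ∀ n, Pu n ≠ 0 := fun n =>
    Finset.prod_ne_zero_iff.mpr fun i hi => hu0 i (Finset.mem_Icc.mp hi).1
  have hPv0 : ∀ n, Pv n ≠ 0 := fun n =>
    Finset.prod_ne_zero_iff.mpr fun i hi => hv0 i (Finset.mem_Icc.mp hi).1
  have hrel' : ∀ m : ℕ, Pu (d * m + j) = C * Pv (d * m + j) := by
    intro m; simp only [hPu_def, hPv_def]; exact hrelate m
  have ht1 : (1 : ℝ) ≤ p.toReal := by
    have h1 : (1 : ℝ≥0∞) ≤ p := Fact.out
    simpa using ENNReal.toReal_mono hp h1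
  have ht0 : p.toReal ≠ 0 := by linarith
  -- the common periodic point
  set f : ℕ → 𝕂 := fun n => if n % d = j then Pu j / Pu n else 0 with hf_def
  have hsum0 : Summable (fun n : ℕ => (1 : ℝ) / ‖Pu n‖ ^ p.toReal) := by
    rw [← summable_nat_add_iff 1]
    simpa only [hPu_def] using hsumu
  have hfz : Memℓp f p := by
    apply memℓp_gen
    apply Summable.of_nonneg_of_le (fun n => by positivity)
      _ (hsum0.mul_left (‖Pu j‖ ^ p.toReal))
    intro n
    by_cases h : n % d = j
    · simp only [hf_def, if_pos h]
      rw [norm_div, Real.div_rpow (norm_nonneg _) (norm_nonneg _), div_eq_mul_one_div]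
    · simp only [hf_def, if_neg h, norm_zero, Real.zero_rpow ht0]
      positivity
  set z : lp (fun _ : ℕ => 𝕂) p := ⟨f, hfz⟩ with hz_def
  have hz_coe : ∀ n, (z : ∀ _ : ℕ, 𝕂) n = f n := fun n => rfl
  -- splitting products
  have hIoc : ∀ m : ℕ, Finset.Icc 1 m = Finset.Ioc 0 m := by
    intro m; ext x; simp [Nat.lt_iff_add_one_le]
  have hsplit : ∀ (w : ℕ → 𝕂) (n k : ℕ),
      (∏ i ∈ Finset.Icc 1 n, w i) * ∏ i ∈ Finset.Icc (n + 1) (n + k), w i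
        = ∏ i ∈ Finset.Icc 1 (n + k), w i := by
    intro w n k
    have h2 : Finset.Icc (n + 1) (n + k) = Finset.Ioc n (n + k) := by
      ext x; simp only [Finset.mem_Icc, Finset.mem_Ioc]; omega
    rw [hIoc, hIoc, h2]
    exact Finset.prod_Ioc_consecutive w (Nat.zero_le n) (by omega)
  -- periodicity of f under both weighted shifts
  have hkey_u : ∀ n, (∏ i ∈ Finset.Icc (n + 1) (n + d), u i) * f (n + d) = f n := by
    intro n
    by_cases h : n % d = j
    · have hnd : (n + d) % d = j := by rw [Nat.add_mod_right]; exact h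
      simp only [hf_def, if_pos h, if_pos hnd]
      have h1 := hsplit u n d
      change Pu n * _ = Pu (n + d) at h1
      rw [← mul_div_assoc, div_eq_div_iff (hPu0 _) (hPu0 _)]
      linear_combination Pu j * h1
    · have hnd : ¬ (n + d) % d = j := by rw [Nat.add_mod_right]; exact h
      simp only [hf_def, if_neg h, if_neg hnd, mul_zero]
  have hkey_v : ∀ n, (∏ i ∈ Finset.Icc (n + 1) (n + d), v i) * f (n + d) = f n := by
    intro n
    by_cases h : n % d = j
    · have hm : n = d * (n / d) + j := by
        have := Nat.div_add_mod n d; omega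
      have hm' : n + d = d * (n / d + 1) + j := by
        have hq : d * (n / d + 1) = d * (n / d) + d := by ring
        omega
      have e1 : Pu n = C * Pv n := by rw [hm]; exact hrel' (n / d)
      have e2 : Pu (n + d) = C * Pv (n + d) := by rw [hm']; exact hrel' (n / d + 1)
      have hnd : (n + d) % d = j := by rw [Nat.add_mod_right]; exact h
      simp only [hf_def, if_pos h, if_pos hnd]
      have h1 := hsplit v n d
      change Pv n * _ = Pv (n + d) at h1
      rw [e1, e2, ← mul_div_assoc,
        div_eq_div_iff (mul_ne_zero hC (hPv0 _)) (mul_ne_zero hC (hPv0 _))]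
      linear_combination C * Pu j * h1
    · have hnd : ¬ (n + d) % d = j := by rw [Nat.add_mod_right]; exact h
      simp only [hf_def, if_neg h, if_neg hnd, mul_zero]
  -- z is periodic for both shifts
  have hfix_u : (⇑Bu)^[d] z = z := by
    rw [← FunLike.coe_pow_eq_iterate]
    apply lp.ext
    funext n
    rw [shift_pow_apply_aux Bu u hBu d z n, hz_coe, hz_coe]
    exact hkey_u n
  have hfix_v : (⇑Bv)^[d] z = z := by
    rw [← FunLike.coe_pow_eq_iterate]
    apply lp.ext
    funext n
    rw [shift_pow_apply_aux Bv v hBv d z n, hz_coe, hz_coe]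
    exact hkey_v n
  -- nonvanishing of the orbit
  have horb_u : ∀ k, (⇑Bu)^[k] z ≠ 0 := by
    intro k hzero
    have hidx : k * d + j = (k * (d - 1) + j) + k := by
      obtain ⟨e, rfl⟩ : ∃ e, d = e + 1 := ⟨d - 1, by omega⟩
      have : k * (e + 1) = k * e + k := by ring
      simp only [Nat.add_sub_cancel]
      omega
    have hmod : (k * d + j) % d = j := by
      rw [mul_comm, Nat.mul_add_mod]; exact Nat.mod_eq_of_lt hj
    have hcoord : ((Bu ^ k) z : ∀ _ : ℕ, 𝕂) (k * (d - 1) + j) = 0 := by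
      rw [FunLike.coe_pow_eq_iterate, hzero]
      exact congrFun (lp.coeFn_zero (fun _ : ℕ => 𝕂) p) _
    rw [shift_pow_apply_aux Bu u hBu, hz_coe, ← hidx] at hcoord
    have hfne : f (k * d + j) ≠ 0 := by
      simp only [hf_def, if_pos hmod]
      exact div_ne_zero (hPu0 j) (hPu0 _)
    have hprodne : (∏ i ∈ Finset.Icc (k * (d - 1) + j + 1) (k * d + j), u i) ≠ 0 :=
      Finset.prod_ne_zero_iff.mpr fun i hi => hu0 i (by
        have := (Finset.mem_Icc.mp hi).1; omega)
    exact (mul_ne_zero hprodne hfne) hcoord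
  have horb_v : ∀ k, (⇑Bv)^[k] z ≠ 0 := by
    intro k hzero
    have hidx : k * d + j = (k * (d - 1) + j) + k := by
      obtain ⟨e, rfl⟩ : ∃ e, d = e + 1 := ⟨d - 1, by omega⟩
      have : k * (e + 1) = k * e + k := by ring
      simp only [Nat.add_sub_cancel]
      omega
    have hmod : (k * d + j) % d = j := by
      rw [mul_comm, Nat.mul_add_mod]; exact Nat.mod_eq_of_lt hj
    have hcoord : ((Bv ^ k) z : ∀ _ : ℕ, 𝕂) (k * (d - 1) + j) = 0 := by
      rw [FunLike.coe_pow_eq_iterate, hzero]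
      exact congrFun (lp.coeFn_zero (fun _ : ℕ => 𝕂) p) _
    rw [shift_pow_apply_aux Bv v hBv, hz_coe, ← hidx] at hcoord
    have hfne : f (k * d + j) ≠ 0 := by
      simp only [hf_def, if_pos hmod]
      exact div_ne_zero (hPu0 j) (hPu0 _)
    have hprodne : (∏ i ∈ Finset.Icc (k * (d - 1) + j + 1) (k * d + j), v i) ≠ 0 :=
      Finset.prod_ne_zero_iff.mpr fun i hi => hv0 i (by
        have := (Finset.mem_Icc.mp hi).1; omega)
    exact (mul_ne_zero hprodne hfne) hcoord
  -- build the measures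
  obtain ⟨mu, hmu1, hmu2, hmu3, hmu4⟩ :=
    periodic_orbit_measure_aux (⇑Bu) Bu.continuous.measurable z d hd hfix_u
  obtain ⟨mv, hmv1, hmv2, hmv3, hmv4⟩ :=
    periodic_orbit_measure_aux (⇑Bv) Bv.continuous.measurable z d hd hfix_v
  have ht1s : T1Space (lp (fun _ : ℕ => 𝕂) p) := by
    set_option synthInstance.maxHeartbeats 1000000 in infer_instance
  have hsing0 : MeasurableSet ({0} : Set (lp (fun _ : ℕ => 𝕂) p)) :=
    isClosed_singleton.measurableSet
  refine ⟨mu, mv, hmu1, hmv1, hmu2, hmv2, ?_, ?_, ?_⟩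
  · exact hmu4 0 hsing0 fun k _ => horb_u k
  · exact hmv4 0 hsing0 fun k _ => horb_v k
  · rintro ⟨E, hEm, hE1, hE2⟩
    have h1 : z ∉ E := hmu3 E hEm hE1
    have h2 : z ∉ Eᶜ := hmv3 Eᶜ hEm.compl hE2
    exact h2 h1
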